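/- Let ℓ be a Lyndon word and let w be a word with canonical factorization w = ℓ1 ℓ2 ... ℓk (k ≥ 1, each ℓi Lyndon, ℓ1 ≥ ℓ2 ≥ ... ≥ ℓk). Then ℓ > w if and only if ℓ > ℓ1. -/

import Mathlib

/- Words over a linearly ordered alphabet `I` are lists, compared by the
lexicographic order of Lean's `LinearOrder (List I)` instance, in which a word
is smaller than any word of which it is a proper prefix. -/

variable {I : Type*} [LinearOrder I]

/-- A nonempty word is *Lyndon* if it is lexicographically smaller than
every proper nonempty suffix of itself. -/
def IsLyndon (w : List I) : Prop :=
  w ≠ [] ∧ ∀ i, 0 < i → i < w.length → w < w.drop i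

/-- `r` is the longest proper suffix of `l` that is Lyndon
(the right factor `l^r` of the costandard factorization). -/
def LongestLyndonSuffix (l r : List I) : Prop :=
  r <:+ l ∧ r.length < l.length ∧ IsLyndon r ∧
    ∀ r', r' <:+ l → r'.length < l.length → IsLyndon r' → r'.length ≤ r.length

/-- `p` is the longest proper prefix of `l` that is Lyndon
(the left factor `l^{ls}` of the standard factorization). -/
def LongestLyndonPrefix (l p : List I) : Prop :=
  p <+: l ∧ p.length < l.length ∧ IsLyndon p ∧
    ∀ p', p' <+: l → p'.length < l.length → IsLyndon p' → p'.length ≤ p.length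

/-- `fs` is the canonical factorization of `w`: a nonempty, lexicographically
nonincreasing list of Lyndon words whose concatenation is `w`. -/
def IsCanonicalFactorization (w : List I) (fs : List (List I)) : Prop :=
  w = fs.flatten ∧ fs ≠ [] ∧ (∀ f ∈ fs, IsLyndon f) ∧ fs.Chain' (· ≥ ·)
private lemma lex_prefix_le {x y : List I} (h : x <+: y) : x ≤ y := by
  obtain ⟨t, rfl⟩ := h
  rcases t with _ | ⟨a, t⟩
  · simp
  · refine le_of_lt ?_
    show List.Lex (· < ·) x (x ++ a :: t)
    induction x with
    | nil => exact List.Lex.nil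
    | cons b x ih => exact List.Lex.cons ih

private lemma lex_append_lt_append_iff (x a b : List I) : x ++ a < x ++ b ↔ a < b := by
  constructor
  · intro h
    induction x with
    | nil => exact h
    | cons c x ih =>
      exact ih (List.lex_cons_iff.mp h)
  · intro h
    exact List.Lex.append_left _ h x

private lemma lex_append_le_append_iff (x a b : List I) : x ++ a ≤ x ++ b ↔ a ≤ b := by
  rw [← not_lt, ← not_lt, lex_append_lt_append_iff]

private lemma lt_of_lt_not_prefix : ∀ {x s : List I}, x < s → ¬ x <+: s →
    ∀ y, x ++ y < s := by
  intro x s h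
  induction h with
  | nil => intro hp; exact absurd (List.nil_prefix) hp
  | @cons a l₁ l₂ h ih =>
    intro hp y
    have hp' : ¬ l₁ <+: l₂ := fun h' => hp (List.cons_prefix_cons.mpr ⟨rfl, h'⟩)
    exact List.Lex.cons (ih hp' y)
  | @rel a l₁ b l₂ h =>
    intro _ y
    exact List.Lex.rel h

private lemma prefix_of_lt_le : ∀ (x ℓ s : List I), x < ℓ → ℓ ≤ s → x <+: s → x <+: ℓ := by
  intro x
  induction x with
  | nil => intro _ _ _ _ _; exact List.nil_prefix
  | cons a x ih =>
    intro ℓ s hxl hls hxs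
    rcases s with _ | ⟨c, s⟩
    · exact absurd hxs (by simp)
    obtain ⟨rfl, hxs'⟩ := List.cons_prefix_cons.mp hxs
    rcases ℓ with _ | ⟨b, ℓ⟩
    · exact absurd hxl (by exact List.not_lex_nil)
    cases hxl with
    | rel hab =>
      exact absurd hls (not_le_of_gt (List.Lex.rel hab))
    | cons h =>
      have hls' : ℓ ≤ s := by
        rw [← not_lt] at hls ⊢
        exact fun hc => hls (List.Lex.cons hc)
      exact List.cons_prefix_cons.mpr ⟨rfl, ih ℓ s h hls' hxs'⟩

private lemma flatten_lt (ℓ : List I) (hℓ : IsLyndon ℓ) :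
    ∀ (fs : List (List I)) (s : List I), (∀ f ∈ fs, f ≠ [] ∧ f < ℓ) → ℓ ≤ s →
      fs.flatten < s := by
  intro fs
  induction fs with
  | nil =>
    intro s _ hls
    rcases s with _ | ⟨a, s⟩
    · exact absurd (le_antisymm hls (le_of_not_gt (by exact List.not_lex_nil))) hℓ.1
    · exact List.Lex.nil
  | cons x rest ih =>
    intro s hf hls
    have hxℓ : x < ℓ := (hf x (by simp)).2
    have hxne : x ≠ [] := (hf x (by simp)).1
    by_cases hp : x <+: s
    · obtain ⟨s', rfl⟩ := hp
      have hxpℓ : x <+: ℓ := prefix_of_lt_le x ℓ (x ++ s') hxℓ hls ⟨s', rfl⟩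
      obtain ⟨ℓ', rfl⟩ := hxpℓ
      have hℓ'ne : ℓ' ≠ [] := by
        rintro rfl
        rw [List.append_nil] at hxℓ
        exact lt_irrefl _ hxℓ
      have hdrop : (x ++ ℓ') < ℓ' := by
        have := hℓ.2 x.length (by
          cases x with
          | nil => exact absurd rfl hxne
          | cons _ _ => simp) (by
          simp
          cases ℓ' with
          | nil => exact absurd rfl hℓ'ne
          | cons _ _ => simp)
        rwa [List.drop_left] at this
      have hls' : ℓ' ≤ s' := (lex_append_le_append_iff x ℓ' s').mp hls
      have : (x ++ ℓ') ≤ s' := le_of_lt (lt_of_lt_of_le hdrop hls')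
      have hr := ih s' (fun f hfm => hf f (by simp [hfm])) this
      show x ++ rest.flatten < x ++ s'
      exact (lex_append_lt_append_iff x _ _).mpr hr
    · show x ++ rest.flatten < s
      exact lt_of_lt_not_prefix (lt_of_lt_of_le hxℓ hls) hp _

/-- For a Lyndon word `ℓ` and a word `w` with canonical factorization
`fs = [ℓ1, …, ℓk]`, one has `ℓ > w` if and only if `ℓ > ℓ1`. -/
theorem lyndon_gt_iff_gt_head (ℓ w : List I) (fs : List (List I))
    (hℓ : IsLyndon ℓ) (hfac : IsCanonicalFactorization w fs) :
    w < ℓ ↔ fs.head hfac.2.1 < ℓ := by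
  obtain ⟨hw, hne, hlyn, hchain⟩ := hfac
  rcases fs with _ | ⟨f, rest⟩
  · exact absurd rfl hne
  simp only [List.head_cons]
  constructor
  · intro hwℓ
    have : f <+: w := by rw [hw]; exact ⟨rest.flatten, rfl⟩
    exact lt_of_le_of_lt (lex_prefix_le this) hwℓ
  · intro hfℓ
    have hpair : List.Pairwise (· ≥ ·) (f :: rest) :=
      List.isChain_iff_pairwise.mp hchain
    have hall : ∀ g ∈ (f :: rest), g ≠ [] ∧ g < ℓ := by
      intro g hg
      refine ⟨(hlyn g hg).1, ?_⟩
      rcases List.mem_cons.mp hg with rfl | hg'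
      · exact hfℓ
      · exact lt_of_le_of_lt ((List.pairwise_cons.mp hpair).1 g hg') hfℓ
    rw [hw]
    exact flatten_lt ℓ hℓ _ ℓ hall le_rfl
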